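/- arXiv:2302.05529 — 2 statements merged into one kernel-verified Lean document; each statement's English description precedes it below -/
import Mathlib

section
/- Let α = (l−1)r + n + 1 with l ∈ ℤ and 0 ≤ n ≤ r−2. Then the linear span S of v_{n+1}, …, v_{r−1} is the unique nonzero proper Ū-submodule of V_α; moreover S is isomorphic as a Ū-module to S_{r−n−2}^{(l−1)r}, the quotient V_α/S is isomorphic to S_n^{lr}, and the resulting short exact sequence 0 → S_{r−n−2}^{(l−1)r} → V_α → S_n^{lr} → 0 does not split. -/
noncomputable section

open scoped TensorProduct

namespace Unrolled

/-- `q^z = exp(π √-1 z / r)`. -/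
def qc (r : ℕ) (z : ℂ) : ℂ := Complex.exp (Real.pi * Complex.I * z / r)

/-- `{z} = q^z - q^{-z}`. -/
def qbrk (r : ℕ) (z : ℂ) : ℂ := qc r z - qc r (-z)

/-- `[z] = {z}/{1}`. -/
def qint (r : ℕ) (z : ℂ) : ℂ := qbrk r z / qbrk r 1

/-- `{n}! = ∏_{i=1}^n {i}`. -/
def qbrkFact (r n : ℕ) : ℂ := ∏ i ∈ Finset.range n, qbrk r ((i : ℂ) + 1)

/-- `[n]! = ∏_{i=1}^n [i]`. -/
def qintFact (r n : ℕ) : ℂ := ∏ i ∈ Finset.range n, qint r ((i : ℂ) + 1)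

/-- The data of five operators `K, K⁻¹, H, E, F` on a complex vector space. -/
structure Ops (V : Type) [AddCommGroup V] [Module ℂ V] where
  K : Module.End ℂ V
  Kinv : Module.End ℂ V
  H : Module.End ℂ V
  E : Module.End ℂ V
  F : Module.End ℂ V

/-- A module over the restricted unrolled quantum group `Ū = Ū_q^H(sl₂(ℂ))`:
five operators satisfying the defining relations of `Ū`. -/
structure Rep (r : ℕ) (V : Type) [AddCommGroup V] [Module ℂ V] extends Ops V where
  rel_KKinv : K * Kinv = 1
  rel_KinvK : Kinv * K = 1
  rel_HK : H * K = K * H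
  rel_HE : H * E - E * H = (2 : ℂ) • E
  rel_HF : H * F - F * H = (-2 : ℂ) • F
  rel_KE : K * E = qc r 2 • (E * K)
  rel_KF : K * F = qc r (-2) • (F * K)
  rel_EF : E * F - F * E = (qbrk r 1)⁻¹ • (K - Kinv)
  rel_Er : E ^ r = 0
  rel_Fr : F ^ r = 0

variable {V W U : Type} [AddCommGroup V] [Module ℂ V] [AddCommGroup W] [Module ℂ W]
  [AddCommGroup U] [Module ℂ U]

/-- A `Ū`-submodule: a subspace invariant under the five operators. -/
def Ops.Invariant (A : Ops V) (p : Submodule ℂ V) : Prop :=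
  (∀ v ∈ p, A.K v ∈ p) ∧ (∀ v ∈ p, A.Kinv v ∈ p) ∧ (∀ v ∈ p, A.H v ∈ p) ∧
    (∀ v ∈ p, A.E v ∈ p) ∧ (∀ v ∈ p, A.F v ∈ p)

/-- A simple `Ū`-module: nonzero, with no nonzero proper invariant subspace. -/
def Ops.IsSimple (A : Ops V) : Prop :=
  (∃ v : V, v ≠ 0) ∧ ∀ p : Submodule ℂ V, A.Invariant p → p = ⊥ ∨ p = ⊤

/-- A weight module: finite dimensional, a direct sum of `H`-eigenspaces, on which `K`
acts by `q^μ` on the `H`-eigenspace of eigenvalue `μ`. -/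
structure IsWeight (r : ℕ) {V : Type} [AddCommGroup V] [Module ℂ V] (A : Ops V) : Prop where
  finDim : FiniteDimensional ℂ V
  sup_eigenspaces : (⨆ μ : ℂ, Module.End.eigenspace A.H μ) = ⊤
  K_apply : ∀ (μ : ℂ), ∀ v ∈ Module.End.eigenspace A.H μ, A.K v = qc r μ • v

/-- A `Ū`-linear map. -/
def IsEquivariant (A : Ops V) (B : Ops W) (f : V →ₗ[ℂ] W) : Prop :=
  (∀ v, f (A.K v) = B.K (f v)) ∧ (∀ v, f (A.Kinv v) = B.Kinv (f v)) ∧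
    (∀ v, f (A.H v) = B.H (f v)) ∧ (∀ v, f (A.E v) = B.E (f v)) ∧
    (∀ v, f (A.F v) = B.F (f v))

/-- Isomorphism of `Ū`-modules. -/
def OpsIso (A : Ops V) (B : Ops W) : Prop :=
  ∃ e : V ≃ₗ[ℂ] W, IsEquivariant A B (e : V →ₗ[ℂ] W)

/-- The weight `α + r - 1 - 2i` of the basis vector `v_i` of the Verma module `V_α`. -/
def wt (r : ℕ) (α : ℂ) (i : ℕ) : ℂ := α + r - 1 - 2 * i

/-- The coefficient `{i}{i-α}/{1}²` occurring in `E v_i`. -/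
def cE (r : ℕ) (α : ℂ) (i : ℕ) : ℂ := qbrk r i * qbrk r ((i : ℂ) - α) / qbrk r 1 ^ 2

/-- The Verma module `V_α` of highest weight `α + r - 1`, realized on `Fin r → ℂ`
with basis `v_0, …, v_{r-1}`. -/
def vermaOps (r : ℕ) (α : ℂ) : Ops (Fin r → ℂ) where
  K := (Matrix.diagonal fun i : Fin r => qc r (wt r α (i : ℕ))).mulVecLin
  Kinv := (Matrix.diagonal fun i : Fin r => qc r (-wt r α (i : ℕ))).mulVecLin
  H := (Matrix.diagonal fun i : Fin r => wt r α (i : ℕ)).mulVecLin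
  E := (Matrix.of fun i j : Fin r =>
    if (j : ℕ) = (i : ℕ) + 1 then cE r α (j : ℕ) else 0).mulVecLin
  F := (Matrix.of fun i j : Fin r =>
    if (i : ℕ) = (j : ℕ) + 1 then (1 : ℂ) else 0).mulVecLin

/-- `α_{l,n} = (l-1)r + n + 1`, so that `S_n^{lr}` is a quotient of `V_{α_{l,n}}`. -/
def aln (r : ℕ) (l : ℤ) (n : ℕ) : ℂ := ((l : ℂ) - 1) * r + n + 1

/-- The simple module `S_n^{lr}` of highest weight `lr + n` and dimension `n+1`,
realized on `Fin (n+1) → ℂ`. -/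
def smodOps (r : ℕ) (l : ℤ) (n : ℕ) : Ops (Fin (n + 1) → ℂ) where
  K := (Matrix.diagonal fun i : Fin (n + 1) => qc r (wt r (aln r l n) (i : ℕ))).mulVecLin
  Kinv := (Matrix.diagonal fun i : Fin (n + 1) => qc r (-wt r (aln r l n) (i : ℕ))).mulVecLin
  H := (Matrix.diagonal fun i : Fin (n + 1) => wt r (aln r l n) (i : ℕ)).mulVecLin
  E := (Matrix.of fun i j : Fin (n + 1) =>
    if (j : ℕ) = (i : ℕ) + 1 then cE r (aln r l n) (j : ℕ) else 0).mulVecLin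
  F := (Matrix.of fun i j : Fin (n + 1) =>
    if (i : ℕ) = (j : ℕ) + 1 then (1 : ℂ) else 0).mulVecLin

/-- `α ∈ (ℂ∖ℤ) ∪ rℤ`. -/
def goodα (r : ℕ) (α : ℂ) : Prop := (¬∃ n : ℤ, α = (n : ℂ)) ∨ ∃ m : ℤ, α = (r : ℂ) * m

/-- The linear span of `v_{n+1}, …, v_{r-1}` in the Verma module `V_α` on `Fin r → ℂ`. -/
def tailSpan (r n : ℕ) : Submodule ℂ (Fin r → ℂ) :=
  Submodule.span ℂ {w : Fin r → ℂ | ∃ i : Fin r, n + 1 ≤ (i : ℕ) ∧ w = Pi.single i 1}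

/- ## Auxiliary lemmas -/

lemma qc_add (r : ℕ) (z w : ℂ) : qc r (z + w) = qc r z * qc r w := by
  rw [qc, qc, qc, ← Complex.exp_add]; congr 1; ring

lemma qc_int_mul (r : ℕ) (hr : r ≠ 0) (m : ℤ) : qc r ((r : ℂ) * m) = (-1 : ℂ) ^ m := by
  have hr' : (r : ℂ) ≠ 0 := Nat.cast_ne_zero.2 hr
  rw [qc]
  have : (Real.pi : ℂ) * Complex.I * ((r : ℂ) * m) / r = m * (Real.pi * Complex.I) := by
    field_simp
  rw [this, Complex.exp_int_mul, Complex.exp_pi_mul_I]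

lemma neg_one_zpow_neg (m : ℤ) : (-1 : ℂ) ^ (-m) = (-1 : ℂ) ^ m := by
  rcases Int.even_or_odd m with h | h
  · rw [Even.neg_one_zpow h.neg, Even.neg_one_zpow h]
  · rw [Odd.neg_one_zpow h.neg, Odd.neg_one_zpow h]

lemma qbrk_add_int_mul (r : ℕ) (hr : r ≠ 0) (z : ℂ) (m : ℤ) :
    qbrk r (z + (r : ℂ) * m) = (-1 : ℂ) ^ m * qbrk r z := by
  have h1 : -(z + (r : ℂ) * m) = -z + (r : ℂ) * (-m : ℤ) := by push_cast; ring
  rw [qbrk, qbrk, qc_add, h1, qc_add, qc_int_mul r hr, qc_int_mul r hr, neg_one_zpow_neg]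
  ring

lemma qbrk_eq_zero_iff (r : ℕ) (hr : r ≠ 0) (z : ℂ) :
    qbrk r z = 0 ↔ ∃ m : ℤ, z = (r : ℂ) * m := by
  have hr' : (r : ℂ) ≠ 0 := Nat.cast_ne_zero.2 hr
  have hpi : (Real.pi : ℂ) ≠ 0 := Complex.ofReal_ne_zero.2 Real.pi_ne_zero
  rw [qbrk, sub_eq_zero, qc, qc, Complex.exp_eq_exp_iff_exists_int]
  constructor
  · rintro ⟨m, hm⟩
    refine ⟨m, ?_⟩
    have h2 : (Real.pi : ℂ) * Complex.I * z / r - Real.pi * Complex.I * (-z) / r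
        = (2 * Real.pi * Complex.I / r) * z := by field_simp; ring
    have h3 : (Real.pi : ℂ) * Complex.I * z / r = Real.pi * Complex.I * (-z) / r + m * (2 * Real.pi * Complex.I) := hm
    have h4 : (2 * Real.pi * Complex.I / r) * z = (2 * Real.pi * Complex.I / r) * ((r:ℂ) * m) := by
      rw [← h2]; field_simp at h3 ⊢; linear_combination h3
    have h5 : (2 * (Real.pi:ℂ) * Complex.I / r) ≠ 0 := by
      apply div_ne_zero _ hr'
      simp [hpi, Complex.I_ne_zero]
    exact mul_left_cancel₀ h5 h4
  · rintro ⟨m, rfl⟩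
    exact ⟨m, by field_simp; ring⟩

lemma qbrk_nat_ne_zero (r : ℕ) (k : ℕ) (h1 : 1 ≤ k) (h2 : k < r) : qbrk r (k : ℂ) ≠ 0 := by
  rw [Ne, qbrk_eq_zero_iff r (by omega)]
  rintro ⟨m, hm⟩
  have : ((k : ℤ) : ℂ) = (((r : ℤ) * m : ℤ) : ℂ) := by push_cast; exact hm
  have h3 : (k : ℤ) = (r : ℤ) * m := by exact_mod_cast this
  rcases lt_trichotomy m 0 with h | h | h
  · have : (r : ℤ) * m ≤ (r : ℤ) * (-1) := mul_le_mul_of_nonneg_left (by omega) (by positivity)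
    omega
  · rw [h, mul_zero] at h3; omega
  · have : (r : ℤ) * 1 ≤ (r : ℤ) * m := mul_le_mul_of_nonneg_left (by omega) (by positivity)
    omega

lemma qbrk_one_ne_zero (r : ℕ) (hr : 2 ≤ r) : qbrk r (1 : ℂ) ≠ 0 := by
  have := qbrk_nat_ne_zero r 1 le_rfl (by omega)
  simpa using this

lemma cE_top_zero (r : ℕ) (hr : r ≠ 0) (l : ℤ) (n : ℕ) : cE r (aln r l n) (n + 1) = 0 := by
  have h : ((n + 1 : ℕ) : ℂ) - aln r l n = (r : ℂ) * ((1 - l : ℤ) : ℂ) := by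
    rw [aln]; push_cast; ring
  rw [cE, h]
  rw [show (r : ℂ) * ((1 - l : ℤ) : ℂ) = 0 + (r:ℂ) * ((1 - l : ℤ):ℂ) by ring,
    qbrk_add_int_mul r hr]
  simp [qbrk, qc]

lemma cE_ne_zero (r : ℕ) (hr : 2 ≤ r) (l : ℤ) (n : ℕ) (hn : n ≤ r - 2)
    (i : ℕ) (h1 : 1 ≤ i) (h2 : i < r) (h3 : i ≠ n + 1) : cE r (aln r l n) i ≠ 0 := by
  rw [cE]
  apply div_ne_zero
  · apply mul_ne_zero (qbrk_nat_ne_zero r i h1 h2)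
    rw [Ne, qbrk_eq_zero_iff r (by omega)]
    rintro ⟨m, hm⟩
    rw [aln] at hm
    have : (((i : ℤ) - (n : ℤ) - 1 : ℤ) : ℂ) = (((r : ℤ) * (m + l - 1) : ℤ) : ℂ) := by
      push_cast; linear_combination hm
    have h4 : (i : ℤ) - n - 1 = (r : ℤ) * (m + l - 1) := by exact_mod_cast this
    set t := m + l - 1 with ht
    rcases lt_trichotomy t 0 with h | h | h
    · have : (r : ℤ) * t ≤ (r : ℤ) * (-1) := mul_le_mul_of_nonneg_left (by omega) (by positivity)
      omega
    · rw [h] at h4; omega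
    · have : (r : ℤ) * 1 ≤ (r : ℤ) * t := mul_le_mul_of_nonneg_left (by omega) (by positivity)
      omega
  · exact pow_ne_zero 2 (qbrk_one_ne_zero r hr)

lemma aln_shift (r : ℕ) (hr : 2 ≤ r) (l : ℤ) (n : ℕ) (hn : n ≤ r - 2) :
    aln r (l - 1) (r - n - 2) = aln r l n - 2 * (n + 1) := by
  have h : ((r - n - 2 : ℕ) : ℂ) = (r : ℂ) - n - 2 := by
    have : r - n - 2 = r - (n + 2) := by omega
    rw [this, Nat.cast_sub (by omega)]; push_cast; ring
  rw [aln, aln, h]; push_cast; ring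

lemma wt_shift (r : ℕ) (hr : 2 ≤ r) (l : ℤ) (n : ℕ) (hn : n ≤ r - 2) (j : ℕ) :
    wt r (aln r (l - 1) (r - n - 2)) j = wt r (aln r l n) (j + n + 1) := by
  rw [wt, wt, aln_shift r hr l n hn]; push_cast; ring

lemma cE_shift (r : ℕ) (hr : 2 ≤ r) (l : ℤ) (n : ℕ) (hn : n ≤ r - 2) (k : ℕ) :
    cE r (aln r (l - 1) (r - n - 2)) k = cE r (aln r l n) (k + n + 1) := by
  have hr0 : r ≠ 0 := by omega
  have e1 : (k : ℂ) - aln r (l - 1) (r - n - 2) = ((k : ℂ) + n + 1) + (r : ℂ) * ((1 - l : ℤ) : ℂ) := by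
    rw [aln_shift r hr l n hn, aln]; push_cast; ring
  have e2 : ((k + n + 1 : ℕ) : ℂ) - aln r l n = (k : ℂ) + (r : ℂ) * ((1 - l : ℤ) : ℂ) := by
    rw [aln]; push_cast; ring
  have e3 : ((k + n + 1 : ℕ) : ℂ) = (k : ℂ) + n + 1 := by push_cast; ring
  rw [cE, cE, e1, e2, e3, qbrk_add_int_mul r hr0, qbrk_add_int_mul r hr0]
  ring

/- ## Matrix application lemmas -/

lemma diag_apply {m : ℕ} (d : Fin m → ℂ) (w : Fin m → ℂ) (i : Fin m) :
    (Matrix.diagonal d).mulVecLin w i = d i * w i := by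
  simp [Matrix.mulVecLin_apply, Matrix.mulVec_diagonal]

lemma super_apply {m : ℕ} (c : ℕ → ℂ) (w : Fin m → ℂ) (i : Fin m) :
    (Matrix.of fun i j : Fin m =>
      if (j : ℕ) = (i : ℕ) + 1 then c (j : ℕ) else 0).mulVecLin w i =
    if h : (i : ℕ) + 1 < m then c ((i : ℕ) + 1) * w ⟨(i : ℕ) + 1, h⟩ else 0 := by
  rw [Matrix.mulVecLin_apply, Matrix.mulVec, dotProduct]
  by_cases h : (i : ℕ) + 1 < m
  · rw [dif_pos h]
    rw [Finset.sum_eq_single (⟨(i : ℕ) + 1, h⟩ : Fin m)]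
    · simp
    · intro j _ hj
      have : (j : ℕ) ≠ (i : ℕ) + 1 := fun he => hj (Fin.ext he)
      simp [Matrix.of_apply, this]
    · simp
  · rw [dif_neg h]
    apply Finset.sum_eq_zero
    intro j _
    have : (j : ℕ) ≠ (i : ℕ) + 1 := by omega
    simp [Matrix.of_apply, this]

lemma sub_apply {m : ℕ} (w : Fin m → ℂ) (i : Fin m) :
    (Matrix.of fun i j : Fin m =>
      if (i : ℕ) = (j : ℕ) + 1 then (1 : ℂ) else 0).mulVecLin w i =
    if h : 1 ≤ (i : ℕ) then w ⟨(i : ℕ) - 1, by omega⟩ else 0 := by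
  rw [Matrix.mulVecLin_apply, Matrix.mulVec, dotProduct]
  by_cases h : 1 ≤ (i : ℕ)
  · rw [dif_pos h]
    rw [Finset.sum_eq_single (⟨(i : ℕ) - 1, by omega⟩ : Fin m)]
    · simp; omega
    · intro j _ hj
      have : (i : ℕ) ≠ (j : ℕ) + 1 := by
        intro he; exact hj (Fin.ext (by (try simp only [Fin.val_mk]); omega))
      simp [Matrix.of_apply, this]
    · simp
  · rw [dif_neg h]
    apply Finset.sum_eq_zero
    intro j _
    have : (i : ℕ) ≠ (j : ℕ) + 1 := by omega
    simp [Matrix.of_apply, this]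

lemma single_apply' {m : ℕ} (a : Fin m) (c : ℂ) (i : Fin m) :
    (Pi.single a c : Fin m → ℂ) i = if (i : ℕ) = (a : ℕ) then c else 0 := by
  rcases eq_or_ne i a with rfl | h
  · simp
  · rw [Pi.single_eq_of_ne h, if_neg (fun he => h (Fin.ext he))]

lemma super_single {m : ℕ} (c : ℕ → ℂ) (a : Fin m) (x : ℂ) :
    (Matrix.of fun i j : Fin m =>
      if (j : ℕ) = (i : ℕ) + 1 then c (j : ℕ) else 0).mulVecLin (Pi.single a x) =
    if h : 1 ≤ (a : ℕ) then Pi.single (⟨(a : ℕ) - 1, by omega⟩ : Fin m) (c (a : ℕ) * x) else 0 := by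
  funext i
  rw [super_apply]
  by_cases h : 1 ≤ (a : ℕ)
  · rw [dif_pos h, single_apply']
    by_cases h2 : (i : ℕ) + 1 < m
    · rw [dif_pos h2, single_apply']
      by_cases h3 : (i : ℕ) + 1 = (a : ℕ)
      · rw [if_pos h3, if_pos (by (try simp only [Fin.val_mk]); omega), h3]
      · rw [if_neg h3, if_neg (by (try simp only [Fin.val_mk]); omega), mul_zero]
    · rw [dif_neg h2, if_neg (by (try simp only [Fin.val_mk]); omega)]
  · rw [dif_neg h]
    by_cases h2 : (i : ℕ) + 1 < m
    · rw [dif_pos h2, single_apply',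
        if_neg (by have := i.isLt; have := a.isLt; (try simp only [Fin.val_mk]); omega), mul_zero]; simp
    · rw [dif_neg h2]; simp

lemma sub_single {m : ℕ} (a : Fin m) (x : ℂ) :
    (Matrix.of fun i j : Fin m =>
      if (i : ℕ) = (j : ℕ) + 1 then (1 : ℂ) else 0).mulVecLin (Pi.single a x) =
    if h : (a : ℕ) + 1 < m then Pi.single (⟨(a : ℕ) + 1, h⟩ : Fin m) x else 0 := by
  funext i
  rw [sub_apply]
  by_cases h : (a : ℕ) + 1 < m
  · rw [dif_pos h, single_apply']
    by_cases h2 : 1 ≤ (i : ℕ)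
    · rw [dif_pos h2, single_apply']
      by_cases h3 : (i : ℕ) - 1 = (a : ℕ)
      · rw [if_pos (by (try simp only [Fin.val_mk]); omega), if_pos (by (try simp only [Fin.val_mk]); omega)]
      · rw [if_neg (by (try simp only [Fin.val_mk]); omega), if_neg (by (try simp only [Fin.val_mk]); omega)]
    · rw [dif_neg h2, if_neg (by (try simp only [Fin.val_mk]); omega)]
  · rw [dif_neg h]
    by_cases h2 : 1 ≤ (i : ℕ)
    · rw [dif_pos h2, single_apply',
        if_neg (by have := i.isLt; have := a.isLt; (try simp only [Fin.val_mk]); omega)]; simp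
    · rw [dif_neg h2]; simp

lemma diag_single_mem {m : ℕ} (d : Fin m → ℂ) (hd : Function.Injective d)
    (p : Submodule ℂ (Fin m → ℂ)) (hp : ∀ v ∈ p, (Matrix.diagonal d).mulVecLin v ∈ p) :
    ∀ w ∈ p, ∀ i, Pi.single i (w i) ∈ p := by
  suffices h : ∀ k : ℕ, ∀ w ∈ p, (Finset.univ.filter fun j => w j ≠ 0).card ≤ k →
      ∀ i, Pi.single i (w i) ∈ p by
    intro w hw i; exact h _ w hw le_rfl i
  intro k
  induction k with
  | zero =>
    intro w hw hc i
    have hwi : w i = 0 := by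
      by_contra hne
      have : i ∈ Finset.univ.filter fun j => w j ≠ 0 := by simp [hne]
      have := Finset.card_pos.2 ⟨i, this⟩
      omega
    rw [hwi]; simpa using p.zero_mem
  | succ k ih =>
    intro w hw hc i
    by_cases hwi : w i = 0
    · rw [hwi]; simpa using p.zero_mem
    by_cases honly : ∀ j, w j ≠ 0 → j = i
    · have he : w = Pi.single i (w i) := by
        funext j
        rcases eq_or_ne j i with rfl | hj
        · simp
        · rw [Pi.single_eq_of_ne hj]
          by_contra hne
          exact hj (honly j hne)
      exact he ▸ hw
    · push_neg at honly
      obtain ⟨j, hj0, hji⟩ := honly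
      set w' := (Matrix.diagonal d).mulVecLin w - d j • w with hw'def
      have hw' : w' ∈ p := p.sub_mem (hp w hw) (p.smul_mem _ hw)
      have hev : ∀ t, w' t = (d t - d j) * w t := by
        intro t
        simp only [hw'def, Pi.sub_apply, Pi.smul_apply, Matrix.mulVecLin_apply,
          Matrix.mulVec_diagonal, smul_eq_mul]
        ring
      have hsub : (Finset.univ.filter fun t => w' t ≠ 0) ⊆
          (Finset.univ.filter fun t => w t ≠ 0).erase j := by
        intro t ht
        simp only [Finset.mem_filter, Finset.mem_univ, true_and] at ht
        rw [Finset.mem_erase]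
        constructor
        · rintro rfl; exact ht (by rw [hev]; ring)
        · simp only [Finset.mem_filter, Finset.mem_univ, true_and]
          intro h0; exact ht (by rw [hev, h0, mul_zero])
      have hjmem : j ∈ Finset.univ.filter fun t => w t ≠ 0 := by simp [hj0]
      have hcard : (Finset.univ.filter fun t => w' t ≠ 0).card ≤ k := by
        have h1 := Finset.card_le_card hsub
        rw [Finset.card_erase_of_mem hjmem] at h1
        omega
      have hkey := ih w' hw' hcard i
      have hne : d i - d j ≠ 0 := sub_ne_zero.2 fun h => hji (hd h).symm
      have hsm := p.smul_mem (d i - d j)⁻¹ hkey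
      have heq : (d i - d j)⁻¹ • (Pi.single i (w' i) : Fin m → ℂ) = Pi.single i (w i) := by
        funext t
        simp only [Pi.smul_apply, smul_eq_mul, single_apply', hev]
        by_cases ht : (t : ℕ) = (i : ℕ)
        · rw [if_pos ht, if_pos ht]
          have : t = i := Fin.ext ht
          subst this
          field_simp
        · rw [if_neg ht, if_neg ht, mul_zero]
      rwa [heq] at hsm

/- ## lowZero and tailSpan -/

def lowZero (r n : ℕ) : Submodule ℂ (Fin r → ℂ) where
  carrier := {w | ∀ i : Fin r, (i : ℕ) < n + 1 → w i = 0}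
  add_mem' := by intro a b ha hb i hi; simp [ha i hi, hb i hi]
  zero_mem' := by intro i _; rfl
  smul_mem' := by intro c a ha i hi; simp [ha i hi]

lemma mem_lowZero {r n : ℕ} {w : Fin r → ℂ} :
    w ∈ lowZero r n ↔ ∀ i : Fin r, (i : ℕ) < n + 1 → w i = 0 := Iff.rfl

lemma tailSpan_eq (r n : ℕ) : tailSpan r n = lowZero r n := by
  apply le_antisymm
  · rw [tailSpan, Submodule.span_le]
    rintro w ⟨i, hi, rfl⟩
    intro j hj
    apply Pi.single_eq_of_ne
    intro he
    rw [he] at hj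
    omega
  · intro w hw
    have hrep : w = ∑ i : Fin r, Pi.single i (w i) := by
      rw [Finset.univ_sum_single]
    rw [hrep]
    apply Submodule.sum_mem
    intro i _
    by_cases hi : n + 1 ≤ (i : ℕ)
    · have : Pi.single i (w i) = w i • (Pi.single i 1 : Fin r → ℂ) := by
        funext t; simp [Pi.single_apply]
      rw [this]
      exact Submodule.smul_mem _ _ (Submodule.subset_span ⟨i, hi, rfl⟩)
    · rw [hw i (by omega)]
      simp

lemma smul_single_one {m : ℕ} (a : Fin m) (c : ℂ) :
    c • (Pi.single a 1 : Fin m → ℂ) = Pi.single a c := by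
  funext t
  simp only [Pi.smul_apply, smul_eq_mul, single_apply']
  split <;> simp

/- ## Operator application lemmas for vermaOps / smodOps -/

lemma vermaK_apply (r : ℕ) (α : ℂ) (w : Fin r → ℂ) (i : Fin r) :
    (vermaOps r α).K w i = qc r (wt r α (i : ℕ)) * w i := diag_apply _ w i

lemma vermaKinv_apply (r : ℕ) (α : ℂ) (w : Fin r → ℂ) (i : Fin r) :
    (vermaOps r α).Kinv w i = qc r (-wt r α (i : ℕ)) * w i := diag_apply _ w i

lemma vermaH_apply (r : ℕ) (α : ℂ) (w : Fin r → ℂ) (i : Fin r) :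
    (vermaOps r α).H w i = wt r α (i : ℕ) * w i := diag_apply _ w i

lemma vermaE_apply (r : ℕ) (α : ℂ) (w : Fin r → ℂ) (i : Fin r) :
    (vermaOps r α).E w i =
    if h : (i : ℕ) + 1 < r then cE r α ((i : ℕ) + 1) * w ⟨(i : ℕ) + 1, h⟩ else 0 :=
  super_apply _ w i

lemma vermaF_apply (r : ℕ) (α : ℂ) (w : Fin r → ℂ) (i : Fin r) :
    (vermaOps r α).F w i =
    if h : 1 ≤ (i : ℕ) then w ⟨(i : ℕ) - 1, by omega⟩ else 0 :=
  sub_apply w i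

lemma vermaE_single (r : ℕ) (α : ℂ) (a : Fin r) (x : ℂ) :
    (vermaOps r α).E (Pi.single a x) =
    if h : 1 ≤ (a : ℕ) then Pi.single (⟨(a : ℕ) - 1, by omega⟩ : Fin r) (cE r α (a : ℕ) * x)
    else 0 :=
  super_single _ a x

lemma vermaF_single (r : ℕ) (α : ℂ) (a : Fin r) (x : ℂ) :
    (vermaOps r α).F (Pi.single a x) =
    if h : (a : ℕ) + 1 < r then Pi.single (⟨(a : ℕ) + 1, h⟩ : Fin r) x else 0 :=
  sub_single a x

lemma smodK_apply (r : ℕ) (l : ℤ) (n : ℕ) (w : Fin (n + 1) → ℂ) (i : Fin (n + 1)) :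
    (smodOps r l n).K w i = qc r (wt r (aln r l n) (i : ℕ)) * w i := diag_apply _ w i

lemma smodKinv_apply (r : ℕ) (l : ℤ) (n : ℕ) (w : Fin (n + 1) → ℂ) (i : Fin (n + 1)) :
    (smodOps r l n).Kinv w i = qc r (-wt r (aln r l n) (i : ℕ)) * w i := diag_apply _ w i

lemma smodH_apply (r : ℕ) (l : ℤ) (n : ℕ) (w : Fin (n + 1) → ℂ) (i : Fin (n + 1)) :
    (smodOps r l n).H w i = wt r (aln r l n) (i : ℕ) * w i := diag_apply _ w i

lemma smodE_apply (r : ℕ) (l : ℤ) (n : ℕ) (w : Fin (n + 1) → ℂ) (i : Fin (n + 1)) :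
    (smodOps r l n).E w i =
    if h : (i : ℕ) + 1 < n + 1 then cE r (aln r l n) ((i : ℕ) + 1) * w ⟨(i : ℕ) + 1, h⟩
    else 0 :=
  super_apply _ w i

lemma smodF_apply (r : ℕ) (l : ℤ) (n : ℕ) (w : Fin (n + 1) → ℂ) (i : Fin (n + 1)) :
    (smodOps r l n).F w i =
    if h : 1 ≤ (i : ℕ) then w ⟨(i : ℕ) - 1, by omega⟩ else 0 :=
  sub_apply w i

/- ## Invariance of the tail span -/

lemma invariant_tail (r : ℕ) (hr : 2 ≤ r) (l : ℤ) (n : ℕ) (hn : n ≤ r - 2) :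
    (vermaOps r (aln r l n)).Invariant (tailSpan r n) := by
  have hnr : n + 2 ≤ r := by omega
  refine ⟨?_, ?_, ?_, ?_, ?_⟩ <;> intro v hv <;> rw [tailSpan_eq] at hv ⊢ <;>
    rw [mem_lowZero] at hv ⊢ <;> intro i hi
  · rw [vermaK_apply, hv i hi, mul_zero]
  · rw [vermaKinv_apply, hv i hi, mul_zero]
  · rw [vermaH_apply, hv i hi, mul_zero]
  · rw [vermaE_apply]
    by_cases h : (i : ℕ) + 1 < r
    · rw [dif_pos h]
      by_cases h2 : (i : ℕ) = n
      · have hz : cE r (aln r l n) ((i : ℕ) + 1) = 0 := by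
          rw [show (i : ℕ) + 1 = n + 1 by omega]
          exact cE_top_zero r (by omega) l n
        rw [hz, zero_mul]
      · rw [hv ⟨(i : ℕ) + 1, h⟩ (by (try simp only [Fin.val_mk]); omega), mul_zero]
    · rw [dif_neg h]
  · rw [vermaF_apply]
    by_cases h : 1 ≤ (i : ℕ)
    · rw [dif_pos h]
      exact hv ⟨(i : ℕ) - 1, by omega⟩ (by (try simp only [Fin.val_mk]); omega)
    · rw [dif_neg h]

lemma tail_ne_bot (r : ℕ) (hr : 2 ≤ r) (n : ℕ) (hn : n ≤ r - 2) : tailSpan r n ≠ ⊥ := by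
  have hnr : n + 2 ≤ r := by omega
  have hmem : (Pi.single (⟨n + 1, by omega⟩ : Fin r) 1 : Fin r → ℂ) ∈ tailSpan r n :=
    Submodule.subset_span ⟨⟨n + 1, by omega⟩, by simp, rfl⟩
  intro hb
  rw [hb, Submodule.mem_bot] at hmem
  have := congrFun hmem ⟨n + 1, by omega⟩
  simp at this

lemma tail_ne_top (r : ℕ) (hr : 2 ≤ r) (n : ℕ) (hn : n ≤ r - 2) : tailSpan r n ≠ ⊤ := by
  have hnr : n + 2 ≤ r := by omega
  intro ht
  have hmem : (Pi.single (⟨0, by omega⟩ : Fin r) 1 : Fin r → ℂ) ∈ lowZero r n := by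
    rw [← tailSpan_eq, ht]; trivial
  have := hmem ⟨0, by omega⟩ (by (try simp only [Fin.val_mk]); omega)
  simp at this

/- ## Uniqueness of the invariant subspace -/

lemma unique_sub (r : ℕ) (hr : 2 ≤ r) (l : ℤ) (n : ℕ) (hn : n ≤ r - 2)
    (p : Submodule ℂ (Fin r → ℂ)) (hp : (vermaOps r (aln r l n)).Invariant p)
    (hbot : p ≠ ⊥) (htop : p ≠ ⊤) : p = tailSpan r n := by
  have hnr : n + 2 ≤ r := by omega
  obtain ⟨hK, hKi, hH, hE, hF⟩ := hp
  have hdiaginj : Function.Injective (fun i : Fin r => wt r (aln r l n) (i : ℕ)) := by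
    intro a b hab
    simp only [wt] at hab
    have : ((a : ℕ) : ℂ) = ((b : ℕ) : ℂ) := by linear_combination (-(1 : ℂ) / 2) * hab
    exact Fin.ext (Nat.cast_injective this)
  have hsing : ∀ w ∈ p, ∀ i, Pi.single i (w i) ∈ p :=
    diag_single_mem _ hdiaginj p hH
  have hone : ∀ i : Fin r, ∀ c : ℂ, c ≠ 0 → Pi.single i c ∈ p →
      (Pi.single i 1 : Fin r → ℂ) ∈ p := by
    intro i c hc hm
    have hsm := p.smul_mem c⁻¹ hm
    rwa [show c⁻¹ • (Pi.single i c : Fin r → ℂ) = Pi.single i 1 by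
      rw [← smul_single_one i c, smul_smul, inv_mul_cancel₀ hc, one_smul]] at hsm
  have hup1 : ∀ i : Fin r, (Pi.single i 1 : Fin r → ℂ) ∈ p → ∀ (h : (i : ℕ) + 1 < r),
      (Pi.single (⟨(i : ℕ) + 1, h⟩ : Fin r) 1 : Fin r → ℂ) ∈ p := by
    intro i hi h
    have hm := hF _ hi
    rw [vermaF_single, dif_pos h] at hm
    exact hm
  have hdown1 : ∀ i : Fin r, (Pi.single i 1 : Fin r → ℂ) ∈ p → 1 ≤ (i : ℕ) → (i : ℕ) ≠ n + 1 →
      (Pi.single (⟨(i : ℕ) - 1, by omega⟩ : Fin r) 1 : Fin r → ℂ) ∈ p := by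
    intro i hi h1 h2
    have hm := hE _ hi
    rw [vermaE_single, dif_pos h1] at hm
    exact hone _ _ (by rw [mul_one]; exact cE_ne_zero r hr l n hn (i : ℕ) h1 i.isLt h2) hm
  have hupk : ∀ k : ℕ, ∀ i : Fin r, (Pi.single i 1 : Fin r → ℂ) ∈ p →
      ∀ (h : (i : ℕ) + k < r), (Pi.single (⟨(i : ℕ) + k, h⟩ : Fin r) 1 : Fin r → ℂ) ∈ p := by
    intro k
    induction k with
    | zero =>
      intro i hi h
      rwa [show (⟨(i : ℕ) + 0, h⟩ : Fin r) = i from Fin.ext (by simp)]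
    | succ k ih =>
      intro i hi h
      have hk : (i : ℕ) + k < r := by omega
      have hm := hup1 ⟨(i : ℕ) + k, hk⟩ (ih i hi hk) (by (try simp only [Fin.val_mk]); omega)
      rwa [show (⟨((⟨(i : ℕ) + k, hk⟩ : Fin r) : ℕ) + 1, _⟩ : Fin r) = ⟨(i : ℕ) + (k + 1), h⟩ from
        Fin.ext (by (try simp only [Fin.val_mk]); omega)] at hm
  have hdownk : ∀ k : ℕ, ∀ i : Fin r, (Pi.single i 1 : Fin r → ℂ) ∈ p →
      (∀ t : ℕ, (i : ℕ) - k < t → t ≤ (i : ℕ) → t ≠ n + 1) → k ≤ (i : ℕ) →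
      (Pi.single (⟨(i : ℕ) - k, Nat.lt_of_le_of_lt (Nat.sub_le _ _) i.isLt⟩ : Fin r) 1 :
        Fin r → ℂ) ∈ p := by
    intro k
    induction k with
    | zero =>
      intro i hi _ _
      rwa [show (⟨(i : ℕ) - 0, _⟩ : Fin r) = i from Fin.ext (by simp)]
    | succ k ih =>
      intro i hi hcond hk
      have hprev := ih i hi (fun t ht1 ht2 => hcond t (by omega) ht2) (by omega)
      have hm := hdown1 ⟨(i : ℕ) - k, _⟩ hprev
        (by (try simp only [Fin.val_mk]); omega)
        (by simp only [Fin.val_mk]; exact hcond _ (by omega) (by omega))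
      rwa [show (⟨((⟨(i : ℕ) - k, _⟩ : Fin r) : ℕ) - 1, _⟩ : Fin r) =
        ⟨(i : ℕ) - (k + 1), Nat.lt_of_le_of_lt (Nat.sub_le _ _) i.isLt⟩ from
        Fin.ext (by (try simp only [Fin.val_mk]); omega)] at hm
  obtain ⟨w, hw, hwne⟩ : ∃ w ∈ p, w ≠ 0 := by
    by_contra h
    push_neg at h
    apply hbot
    rw [eq_bot_iff]
    intro v hv
    rw [Submodule.mem_bot]
    exact h v hv
  obtain ⟨i0, hi0⟩ : ∃ i : Fin r, w i ≠ 0 := by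
    by_contra h
    push_neg at h
    exact hwne (funext h)
  have hs0 : (Pi.single i0 1 : Fin r → ℂ) ∈ p := hone i0 (w i0) hi0 (hsing w hw i0)
  have hlow : ∀ i : Fin r, (Pi.single i 1 : Fin r → ℂ) ∈ p → n + 1 ≤ (i : ℕ) := by
    intro i hi
    by_contra hcon
    push_neg at hcon
    have h0 : (Pi.single (⟨0, by omega⟩ : Fin r) 1 : Fin r → ℂ) ∈ p := by
      have hm := hdownk (i : ℕ) i hi (fun t ht1 ht2 => by omega) le_rfl
      rwa [show (⟨(i : ℕ) - (i : ℕ), _⟩ : Fin r) = ⟨0, by omega⟩ from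
        Fin.ext (by (try simp only [Fin.val_mk]); omega)] at hm
    apply htop
    rw [eq_top_iff]
    intro v _
    rw [show v = ∑ j : Fin r, Pi.single j (v j) from (Finset.univ_sum_single v).symm]
    apply Submodule.sum_mem
    intro j _
    have hj : (Pi.single j 1 : Fin r → ℂ) ∈ p := by
      have hm := hupk (j : ℕ) ⟨0, by omega⟩ h0 (by (try simp only [Fin.val_mk]); omega)
      rwa [show (⟨((⟨0, by omega⟩ : Fin r) : ℕ) + (j : ℕ), _⟩ : Fin r) = j from
        Fin.ext (by (try simp only [Fin.val_mk]); omega)] at hm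
    have hsm := p.smul_mem (v j) hj
    rwa [smul_single_one] at hsm
  apply le_antisymm
  · intro v hv
    rw [tailSpan_eq, mem_lowZero]
    intro i hi
    by_contra hne
    have := hlow i (hone i (v i) hne (hsing v hv i))
    omega
  · rw [tailSpan, Submodule.span_le]
    rintro w2 ⟨i, hi, rfl⟩
    have hn1 := hlow i0 hs0
    rcases le_or_gt (i : ℕ) (i0 : ℕ) with hle | hlt
    · have hm := hdownk ((i0 : ℕ) - (i : ℕ)) i0 hs0 (fun t ht1 ht2 => by omega) (by omega)
      rwa [show (⟨(i0 : ℕ) - ((i0 : ℕ) - (i : ℕ)), _⟩ : Fin r) = i from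
        Fin.ext (by (try simp only [Fin.val_mk]); omega)] at hm
    · have hm := hupk ((i : ℕ) - (i0 : ℕ)) i0 hs0 (by have := i.isLt; omega)
      rwa [show (⟨(i0 : ℕ) + ((i : ℕ) - (i0 : ℕ)), _⟩ : Fin r) = i from
        Fin.ext (by (try simp only [Fin.val_mk]); omega)] at hm

/- ## The maps f and g -/

def gmap (r n : ℕ) (h : n + 2 ≤ r) : (Fin r → ℂ) →ₗ[ℂ] (Fin (n + 1) → ℂ) where
  toFun w := fun i => w ⟨(i : ℕ), by have := i.isLt; omega⟩
  map_add' _ _ := rfl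
  map_smul' _ _ := rfl

lemma gmap_apply (r n : ℕ) (h : n + 2 ≤ r) (w : Fin r → ℂ) (i : Fin (n + 1)) :
    gmap r n h w = fun i : Fin (n + 1) => w ⟨(i : ℕ), by have := i.isLt; omega⟩ := rfl

def fmap (r n : ℕ) (h : n + 2 ≤ r) : (Fin (r - n - 2 + 1) → ℂ) →ₗ[ℂ] (Fin r → ℂ) where
  toFun u := fun i =>
    if h2 : n + 1 ≤ (i : ℕ) then u ⟨(i : ℕ) - (n + 1), by have := i.isLt; omega⟩ else 0
  map_add' u v := by
    funext i
    by_cases h2 : n < (i : ℕ) <;> simp [h2]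
  map_smul' c u := by
    funext i
    by_cases h2 : n < (i : ℕ) <;> simp [h2]

lemma fmap_apply (r n : ℕ) (h : n + 2 ≤ r) (u : Fin (r - n - 2 + 1) → ℂ) (i : Fin r) :
    fmap r n h u i =
    if h2 : n + 1 ≤ (i : ℕ) then u ⟨(i : ℕ) - (n + 1), by have := i.isLt; omega⟩ else 0 := rfl

lemma gmap_surjective (r n : ℕ) (h : n + 2 ≤ r) : Function.Surjective (gmap r n h) := by
  intro u
  refine ⟨fun i => if h2 : (i : ℕ) < n + 1 then u ⟨(i : ℕ), h2⟩ else 0, ?_⟩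
  funext i
  show (if h2 : ((⟨(i : ℕ), _⟩ : Fin r) : ℕ) < n + 1 then u ⟨_, h2⟩ else 0) = u i
  rw [dif_pos (show ((⟨(i : ℕ), by have := i.isLt; omega⟩ : Fin r) : ℕ) < n + 1 from i.isLt)]

lemma gmap_ker (r n : ℕ) (h : n + 2 ≤ r) : LinearMap.ker (gmap r n h) = tailSpan r n := by
  rw [tailSpan_eq]
  ext w
  rw [LinearMap.mem_ker, mem_lowZero]
  constructor
  · intro hw i hi
    have := congrFun hw ⟨(i : ℕ), hi⟩
    exact this
  · intro hw
    funext j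
    show w ⟨(j : ℕ), _⟩ = 0
    exact hw _ (by simp only [Fin.val_mk]; exact j.isLt)

lemma fmap_injective (r n : ℕ) (h : n + 2 ≤ r) : Function.Injective (fmap r n h) := by
  intro a b hab
  funext j
  have hj : (j : ℕ) + n + 1 < r := by have := j.isLt; omega
  have := congrFun hab ⟨(j : ℕ) + n + 1, hj⟩
  rw [fmap_apply, fmap_apply, dif_pos (by (try simp only [Fin.val_mk]); omega),
    dif_pos (by (try simp only [Fin.val_mk]); omega)] at this
  simp only [Fin.val_mk] at this
  rwa [show (⟨(j : ℕ) + n + 1 - (n + 1), by have := j.isLt; omega⟩ : Fin (r - n - 2 + 1)) = j from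
    Fin.ext (by (try simp only [Fin.val_mk]); omega)] at this

lemma fmap_range (r n : ℕ) (h : n + 2 ≤ r) : LinearMap.range (fmap r n h) = tailSpan r n := by
  rw [tailSpan_eq]
  ext w
  constructor
  · rintro ⟨u, rfl⟩
    rw [mem_lowZero]
    intro i hi
    rw [fmap_apply, dif_neg (by omega)]
  · intro hw
    refine ⟨fun j => w ⟨(j : ℕ) + n + 1, by have := j.isLt; omega⟩, ?_⟩
    funext i
    rw [fmap_apply]
    by_cases h2 : n + 1 ≤ (i : ℕ)
    · rw [dif_pos h2]
      congr 1
      exact Fin.ext (by (try simp only [Fin.val_mk]); omega)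
    · rw [dif_neg h2]
      exact (hw i (by omega)).symm

lemma gmap_equivariant (r : ℕ) (hr : 2 ≤ r) (l : ℤ) (n : ℕ) (hn : n ≤ r - 2)
    (h : n + 2 ≤ r) :
    IsEquivariant (vermaOps r (aln r l n)) (smodOps r l n) (gmap r n h) := by
  refine ⟨?_, ?_, ?_, ?_, ?_⟩ <;> intro v <;> funext i <;>
    set i' : Fin r := ⟨(i : ℕ), by have := i.isLt; omega⟩ with hi'
  · show (vermaOps r (aln r l n)).K v i' = (smodOps r l n).K (gmap r n h v) i
    rw [vermaK_apply, smodK_apply]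
    rfl
  · show (vermaOps r (aln r l n)).Kinv v i' = (smodOps r l n).Kinv (gmap r n h v) i
    rw [vermaKinv_apply, smodKinv_apply]
    rfl
  · show (vermaOps r (aln r l n)).H v i' = (smodOps r l n).H (gmap r n h v) i
    rw [vermaH_apply, smodH_apply]
    rfl
  · show (vermaOps r (aln r l n)).E v i' = (smodOps r l n).E (gmap r n h v) i
    rw [vermaE_apply, smodE_apply]
    have hiv : (i' : ℕ) = (i : ℕ) := rfl
    by_cases h2 : (i : ℕ) + 1 < n + 1
    · rw [dif_pos (show (i' : ℕ) + 1 < r by omega), dif_pos h2]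
      rfl
    · rw [dif_neg h2]
      have hin : (i : ℕ) = n := by have := i.isLt; omega
      rw [dif_pos (show (i' : ℕ) + 1 < r by omega)]
      have hz : cE r (aln r l n) ((i' : ℕ) + 1) = 0 := by
        rw [hiv, hin]
        exact cE_top_zero r (by omega) l n
      rw [hz, zero_mul]
  · show (vermaOps r (aln r l n)).F v i' = (smodOps r l n).F (gmap r n h v) i
    rw [vermaF_apply, smodF_apply]
    by_cases h2 : 1 ≤ (i : ℕ)
    · rw [dif_pos (show 1 ≤ (i' : ℕ) from h2), dif_pos h2]
      show v _ = v _
      congr 1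
      all_goals exact Fin.ext (by (try simp only [Fin.val_mk]); omega)
    · rw [dif_neg (show ¬ 1 ≤ (i' : ℕ) from h2), dif_neg h2]

set_option maxHeartbeats 1600000 in
lemma fmap_equivariant (r : ℕ) (hr : 2 ≤ r) (l : ℤ) (n : ℕ) (hn : n ≤ r - 2)
    (h : n + 2 ≤ r) :
    IsEquivariant (smodOps r (l - 1) (r - n - 2)) (vermaOps r (aln r l n)) (fmap r n h) := by
  have hwt : ∀ i : ℕ, n + 1 ≤ i → i < r →
      wt r (aln r (l - 1) (r - n - 2)) (i - (n + 1)) = wt r (aln r l n) i := by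
    intro i h1 h2
    rw [wt_shift r hr l n hn]
    congr 1
    omega
  refine ⟨?_, ?_, ?_, ?_, ?_⟩ <;> intro v <;> funext i
  · show fmap r n h ((smodOps r (l-1) (r-n-2)).K v) i = (vermaOps r (aln r l n)).K (fmap r n h v) i
    rw [fmap_apply, vermaK_apply, fmap_apply]
    by_cases h2 : n + 1 ≤ (i : ℕ)
    · rw [dif_pos h2, dif_pos h2, smodK_apply]
      simp only [Fin.val_mk]
      rw [hwt (i : ℕ) h2 i.isLt]
    · rw [dif_neg h2, dif_neg h2, mul_zero]
  · show fmap r n h ((smodOps r (l-1) (r-n-2)).Kinv v) i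
        = (vermaOps r (aln r l n)).Kinv (fmap r n h v) i
    rw [fmap_apply, vermaKinv_apply, fmap_apply]
    by_cases h2 : n + 1 ≤ (i : ℕ)
    · rw [dif_pos h2, dif_pos h2, smodKinv_apply]
      simp only [Fin.val_mk]
      rw [hwt (i : ℕ) h2 i.isLt]
    · rw [dif_neg h2, dif_neg h2, mul_zero]
  · show fmap r n h ((smodOps r (l-1) (r-n-2)).H v) i = (vermaOps r (aln r l n)).H (fmap r n h v) i
    rw [fmap_apply, vermaH_apply, fmap_apply]
    by_cases h2 : n + 1 ≤ (i : ℕ)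
    · rw [dif_pos h2, dif_pos h2, smodH_apply]
      simp only [Fin.val_mk]
      rw [hwt (i : ℕ) h2 i.isLt]
    · rw [dif_neg h2, dif_neg h2, mul_zero]
  · show fmap r n h ((smodOps r (l-1) (r-n-2)).E v) i = (vermaOps r (aln r l n)).E (fmap r n h v) i
    rw [fmap_apply, vermaE_apply]
    by_cases h2 : n + 1 ≤ (i : ℕ)
    · rw [dif_pos h2, smodE_apply]
      split
      · next h3 =>
        try simp only [Fin.val_mk] at h3
        have h4 : (i : ℕ) + 1 < r := by omega
        rw [dif_pos h4, fmap_apply]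
        split
        · next h5 =>
          rw [cE_shift r hr l n hn]
          have he : (i : ℕ) - (n + 1) + 1 + n + 1 = (i : ℕ) + 1 := by omega
          rw [he]
          exact congrArg₂ (· * ·) rfl (congrArg v (Fin.ext (by (try simp only [Fin.val_mk]); omega)))
        · next h5 =>
          try simp only [Fin.val_mk] at h5
          omega
      · next h3 =>
        try simp only [Fin.val_mk] at h3
        have h4 : ¬ (i : ℕ) + 1 < r := by have := i.isLt; omega
        rw [dif_neg h4]
    · rw [dif_neg h2]
      by_cases h4 : (i : ℕ) + 1 < r
      · rw [dif_pos h4, fmap_apply]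
        split
        · next h5 =>
          try simp only [Fin.val_mk] at h5
          have hin : (i : ℕ) = n := by omega
          have hz : cE r (aln r l n) ((i : ℕ) + 1) = 0 := by
            rw [hin]; exact cE_top_zero r (by omega) l n
          rw [hz, zero_mul]
        · next h5 =>
          rw [mul_zero]
      · rw [dif_neg h4]
  · show fmap r n h ((smodOps r (l-1) (r-n-2)).F v) i = (vermaOps r (aln r l n)).F (fmap r n h v) i
    rw [fmap_apply, vermaF_apply]
    by_cases h2 : n + 1 ≤ (i : ℕ)
    · rw [dif_pos h2, smodF_apply]
      have h3 : 1 ≤ (i : ℕ) := by omega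
      rw [dif_pos h3, fmap_apply]
      split
      · next h5 =>
        try simp only [Fin.val_mk] at h5
        rw [dif_pos (show n + 1 ≤ (i : ℕ) - 1 by omega)]
        congr 1
        exact Fin.ext (by (try simp only [Fin.val_mk]); omega)
      · next h5 =>
        try simp only [Fin.val_mk] at h5
        rw [dif_neg (show ¬ n + 1 ≤ (i : ℕ) - 1 by omega)]
    · rw [dif_neg h2]
      by_cases h3 : 1 ≤ (i : ℕ)
      · rw [dif_pos h3, fmap_apply]
        rw [dif_neg (show ¬ n + 1 ≤ ((⟨(i : ℕ) - 1, by have := i.isLt; omega⟩ : Fin r) : ℕ) by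
          (try simp only [Fin.val_mk]); omega)]
      · rw [dif_neg h3]

/-- For `α = (l-1)r + n + 1` with `l ∈ ℤ` and `0 ≤ n ≤ r-2`, the span `S` of
`v_{n+1}, …, v_{r-1}` is the unique nonzero proper `Ū`-submodule of `V_α`; it is
isomorphic to `S_{r-n-2}^{(l-1)r}`, the quotient `V_α/S` is isomorphic to `S_n^{lr}`,
and the short exact sequence `0 → S_{r-n-2}^{(l-1)r} → V_α → S_n^{lr} → 0` does not
split. -/
theorem stmt4 (r : ℕ) (hr : 2 ≤ r) (l : ℤ) (n : ℕ) (hn : n ≤ r - 2) :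
    (vermaOps r (aln r l n)).Invariant (tailSpan r n) ∧
    tailSpan r n ≠ ⊥ ∧ tailSpan r n ≠ ⊤ ∧
    (∀ p : Submodule ℂ (Fin r → ℂ),
      (vermaOps r (aln r l n)).Invariant p → p ≠ ⊥ → p ≠ ⊤ → p = tailSpan r n) ∧
    (∃ f : (Fin (r - n - 2 + 1) → ℂ) →ₗ[ℂ] (Fin r → ℂ),
      Function.Injective f ∧ LinearMap.range f = tailSpan r n ∧
      IsEquivariant (smodOps r (l - 1) (r - n - 2)) (vermaOps r (aln r l n)) f) ∧
    (∃ g : (Fin r → ℂ) →ₗ[ℂ] (Fin (n + 1) → ℂ),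
      Function.Surjective g ∧ LinearMap.ker g = tailSpan r n ∧
      IsEquivariant (vermaOps r (aln r l n)) (smodOps r l n) g) ∧
    ¬∃ p : Submodule ℂ (Fin r → ℂ),
      (vermaOps r (aln r l n)).Invariant p ∧ IsCompl (tailSpan r n) p := by
  have hnr : n + 2 ≤ r := by omega
  refine ⟨invariant_tail r hr l n hn, tail_ne_bot r hr n hn, tail_ne_top r hr n hn,
    fun p hp h1 h2 => unique_sub r hr l n hn p hp h1 h2,
    ⟨fmap r n hnr, fmap_injective r n hnr, fmap_range r n hnr,
      fmap_equivariant r hr l n hn hnr⟩,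
    ⟨gmap r n hnr, gmap_surjective r n hnr, gmap_ker r n hnr,
      gmap_equivariant r hr l n hn hnr⟩, ?_⟩
  rintro ⟨p, hpinv, hcompl⟩
  have h1 : p ≠ ⊥ := by
    rintro rfl
    exact tail_ne_top r hr n hn (by simpa using hcompl.sup_eq_top)
  have h2 : p ≠ ⊤ := by
    rintro rfl
    exact tail_ne_bot r hr n hn (by simpa using hcompl.inf_eq_bot)
  have hpt := unique_sub r hr l n hn p hpinv h1 h2
  rw [hpt] at hcompl
  have hb := hcompl.inf_eq_bot
  rw [inf_idem] at hb
  exact tail_ne_bot r hr n hn hb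

end Unrolled
end
end

section
/- For all weight modules V and W over Ū, the map c_{V,W} : V⊗W → W⊗V is Ū-linear, where V⊗W and W⊗V carry the Ū-module structures induced by the coproduct Δ. -/
noncomputable section

open scoped TensorProduct

namespace Unrolled

variable {V W U : Type} [AddCommGroup V] [Module ℂ V] [AddCommGroup W] [Module ℂ W]
  [AddCommGroup U] [Module ℂ U]

/-- The tensor product `Ū`-module structure induced by the coproduct `Δ`. -/
def tensorOps (A : Ops V) (B : Ops W) : Ops (V ⊗[ℂ] W) where
  K := TensorProduct.map A.K B.K
  Kinv := TensorProduct.map A.Kinv B.Kinv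
  H := TensorProduct.map A.H (LinearMap.id : W →ₗ[ℂ] W) +
    TensorProduct.map (LinearMap.id : V →ₗ[ℂ] V) B.H
  E := TensorProduct.map (LinearMap.id : V →ₗ[ℂ] V) B.E + TensorProduct.map A.E B.K
  F := TensorProduct.map A.F (LinearMap.id : W →ₗ[ℂ] W) + TensorProduct.map A.Kinv B.F

/-- The operator `Σ_{l=0}^{r-1} ({1}^{2l}/{l}!) q^{l(l-1)/2} E^l ⊗ F^l` on `V ⊗ W`. -/
def braidSum (r : ℕ) (A : Ops V) (B : Ops W) : Module.End ℂ (V ⊗[ℂ] W) :=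
  ∑ l ∈ Finset.range r,
    (qbrk r 1 ^ (2 * l) / qbrkFact r l * qc r ((l : ℂ) * ((l : ℂ) - 1) / 2)) •
      TensorProduct.map (A.E ^ l) (B.F ^ l)

/-- The defining property of the operator `q^{H⊗H/2}` on `V ⊗ W`: it multiplies
`v ⊗ w` by `q^{λμ/2}` for weight vectors `v, w` of weights `λ, μ`. -/
def IsqHH (r : ℕ) (A : Ops V) (B : Ops W) (Q : Module.End ℂ (V ⊗[ℂ] W)) : Prop :=
  ∀ (lam mu : ℂ) (v : V) (w : W),
    v ∈ Module.End.eigenspace A.H lam → w ∈ Module.End.eigenspace B.H mu →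
      Q (v ⊗ₜ[ℂ] w) = qc r (lam * mu / 2) • (v ⊗ₜ[ℂ] w)

/-- The braiding `c_{V,W} = τ ∘ q^{H⊗H/2} ∘ Σ_l ({1}^{2l}/{l}!) q^{l(l-1)/2} E^l ⊗ F^l`,
where `Q` is the operator `q^{H⊗H/2}`. -/
def braidMap (r : ℕ) (A : Ops V) (B : Ops W) (Q : Module.End ℂ (V ⊗[ℂ] W)) :
    V ⊗[ℂ] W →ₗ[ℂ] W ⊗[ℂ] V :=
  (TensorProduct.comm ℂ V W).toLinearMap ∘ₗ Q ∘ₗ braidSum r A B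


section Aux

lemma qc_mul (r : ℕ) (x y : ℂ) : qc r x * qc r y = qc r (x + y) := by
  rw [qc, qc, qc, ← Complex.exp_add]; ring_nf

lemma qc_zero (r : ℕ) : qc r 0 = 1 := by simp [qc]

lemma qc_ne_zero (r : ℕ) (x : ℂ) : qc r x ≠ 0 := Complex.exp_ne_zero _

lemma qc_neg_mul (r : ℕ) (x : ℂ) : qc r (-x) * qc r x = 1 := by
  rw [qc_mul]; simp [qc_zero]

lemma qbrk_ne_zero (r i : ℕ) (h1 : 0 < i) (h2 : i < r) : qbrk r (i : ℂ) ≠ 0 := by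
  have hr : (r : ℂ) ≠ 0 := by exact_mod_cast (by omega : r ≠ 0)
  intro h
  have h0 : qc r (i : ℂ) = qc r (-(i : ℂ)) := by rwa [qbrk, sub_eq_zero] at h
  have h1' : qc r ((i : ℂ) + (i : ℂ)) = 1 := by
    rw [← qc_mul]; nth_rewrite 1 [h0]
    exact qc_neg_mul r _
  rw [qc, Complex.exp_eq_one_iff] at h1'
  obtain ⟨n, hn⟩ := h1'
  have hpi : (Real.pi : ℂ) ≠ 0 := by simpa using Real.pi_ne_zero
  have : (i : ℂ) = n * r := by
    field_simp at hn
    apply mul_left_cancel₀ hpi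
    apply mul_left_cancel₀ Complex.I_ne_zero
    linear_combination Complex.I * (Real.pi:ℂ) * hn / 2
  have hz : (i : ℤ) = n * r := by exact_mod_cast this
  rcases le_or_gt n 0 with hn0 | hn0
  · nlinarith [hz, (show (0:ℤ) < i by exact_mod_cast h1), (show (0:ℤ) < r by omega)]
  · nlinarith [hz, (show (i:ℤ) < r by exact_mod_cast h2)]

lemma qbrkFact_ne_zero (r l : ℕ) (h : l < r) : qbrkFact r l ≠ 0 := by
  rw [qbrkFact]
  apply Finset.prod_ne_zero_iff.2
  intro i hi
  have : ((i : ℂ) + 1) = ((i + 1 : ℕ) : ℂ) := by push_cast; ring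
  rw [this]
  exact qbrk_ne_zero r (i+1) (Nat.succ_pos i) (by simp at hi; omega)

/-- `{1}{b} + {a}{b-a-1} = {a+1}{b-a}`. -/
lemma qbrk_id1 (r : ℕ) (a b : ℂ) :
    qbrk r 1 * qbrk r b + qbrk r a * qbrk r (b - a - 1) = qbrk r (a+1) * qbrk r (b - a) := by
  simp only [qbrk, sub_mul, mul_sub, qc_mul]
  ring_nf

/-- `{1}{b} + {a}{b+a+1} = {a+1}{b+a}`. -/
lemma qbrk_id3 (r : ℕ) (a b : ℂ) :
    qbrk r 1 * qbrk r b + qbrk r a * qbrk r (b + a + 1) = qbrk r (a+1) * qbrk r (b + a) := by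
  simp only [qbrk, sub_mul, mul_sub, qc_mul]
  ring_nf

/-- The coefficient in `braidSum`. -/
def Cc (r l : ℕ) : ℂ := qbrk r 1 ^ (2*l) / qbrkFact r l * qc r ((l:ℂ)*((l:ℂ)-1)/2)

lemma Cc_succ (r l : ℕ) (hf : qbrkFact r l ≠ 0) (hl : qbrk r ((l:ℂ)+1) ≠ 0) :
    Cc r (l+1) = Cc r l * qbrk r 1 ^ 2 * qc r l / qbrk r ((l:ℂ)+1) := by
  rw [Cc, Cc, qbrkFact, Finset.prod_range_succ, ← qbrkFact]
  push_cast
  field_simp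
  rw [show ((l:ℂ)+1)*((l:ℂ)+1-1)/2 = (l:ℂ)*((l:ℂ)-1)/2 + (l:ℂ) by ring, ← qc_mul,
    show (2*(l+1)) = 2*l + 2 by ring, pow_add]
  ring

lemma key_E (r : ℕ) (l : ℕ) (h1 : qbrk r 1 ≠ 0) (hl : qbrk r ((l:ℂ)+1) ≠ 0)
    (hf : qbrkFact r l ≠ 0) (lam mu : ℂ) :
    qc r mu * (Cc r l * qc r ((lam + 2*(l:ℂ) + 2) * (mu - 2*(l:ℂ)) / 2)) =
    Cc r l * qc r ((lam + 2*(l:ℂ)) * (mu - 2*(l:ℂ)) / 2) +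
    (Cc r (l+1) * qc r ((lam + 2*((l:ℂ)+1)) * (mu - 2*((l:ℂ)+1)) / 2) * qc r (lam + 2*(l:ℂ)+2)) *
      (qbrk r ((l:ℂ)+1) * qbrk r (mu - (l:ℂ)) / qbrk r 1 ^ 2) := by
  rw [Cc_succ r l hf hl]
  have hC : Cc r l ≠ 0 := by
    rw [Cc]
    exact mul_ne_zero (div_ne_zero (pow_ne_zero _ h1) hf) (qc_ne_zero r _)
  have key : qc r mu * qc r ((lam + 2*(l:ℂ) + 2) * (mu - 2*(l:ℂ)) / 2) =
      qc r ((lam + 2*(l:ℂ)) * (mu - 2*(l:ℂ)) / 2) +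
      qc r (l:ℂ) * qc r ((lam + 2*((l:ℂ)+1)) * (mu - 2*((l:ℂ)+1)) / 2) * qc r (lam + 2*(l:ℂ)+2) *
        qbrk r (mu - (l:ℂ)) := by
    simp only [qbrk, mul_sub, qc_mul]
    ring_nf
  linear_combination (norm := skip) Cc r l * key
  field_simp
  ring

lemma key_F (r : ℕ) (l : ℕ) (h1 : qbrk r 1 ≠ 0) (hl : qbrk r ((l:ℂ)+1) ≠ 0)
    (hf : qbrkFact r l ≠ 0) (lam mu : ℂ) :
    qc r (-lam) * (Cc r l * qc r ((lam + 2*(l:ℂ)) * (mu - 2 - 2*(l:ℂ)) / 2)) =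
    Cc r l * qc r ((lam + 2*(l:ℂ)) * (mu - 2*(l:ℂ)) / 2) -
    (Cc r (l+1) * qc r ((lam + 2*((l:ℂ)+1)) * (mu - 2*((l:ℂ)+1)) / 2) * qc r (-(mu - 2*(l:ℂ) - 2))) *
      (qbrk r ((l:ℂ)+1) * qbrk r (lam + (l:ℂ)) / qbrk r 1 ^ 2) := by
  rw [Cc_succ r l hf hl]
  have key : qc r (-lam) * qc r ((lam + 2*(l:ℂ)) * (mu - 2 - 2*(l:ℂ)) / 2) =
      qc r ((lam + 2*(l:ℂ)) * (mu - 2*(l:ℂ)) / 2) -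
      qc r (l:ℂ) * qc r ((lam + 2*((l:ℂ)+1)) * (mu - 2*((l:ℂ)+1)) / 2) * qc r (-(mu - 2*(l:ℂ) - 2)) *
        qbrk r (lam + (l:ℂ)) := by
    simp only [qbrk, mul_sub, qc_mul]
    ring_nf
  linear_combination (norm := skip) Cc r l * key
  field_simp
  ring

variable {r : ℕ}

namespace Rep

variable (A : Rep r V)

lemma H_Kinv : A.H * A.Kinv = A.Kinv * A.H := by
  calc A.H * A.Kinv = (A.Kinv * A.K) * (A.H * A.Kinv) := by rw [A.rel_KinvK, one_mul]
    _ = A.Kinv * ((A.H * A.K) * A.Kinv) := by rw [A.rel_HK]; noncomm_ring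
    _ = (A.Kinv * A.H) * (A.K * A.Kinv) := by noncomm_ring
    _ = A.Kinv * A.H := by rw [A.rel_KKinv, mul_one]

lemma H_Kinv_apply {t : ℂ} {v : V} (hv : A.H v = t • v) : A.H (A.Kinv v) = t • A.Kinv v := by
  have h := LinearMap.congr_fun A.H_Kinv v
  simp only [Module.End.mul_apply] at h
  rw [h, hv, map_smul]

lemma H_E_apply {t : ℂ} {v : V} (hv : A.H v = t • v) : A.H (A.E v) = (t + 2) • A.E v := by
  have h := LinearMap.congr_fun A.rel_HE v
  simp only [LinearMap.sub_apply, Module.End.mul_apply, LinearMap.smul_apply] at h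
  have h2 := eq_add_of_sub_eq h
  rw [h2, hv, map_smul, add_smul]
  exact add_comm _ _

lemma H_F_apply {t : ℂ} {v : V} (hv : A.H v = t • v) : A.H (A.F v) = (t - 2) • A.F v := by
  have h := LinearMap.congr_fun A.rel_HF v
  simp only [LinearMap.sub_apply, Module.End.mul_apply, LinearMap.smul_apply] at h
  have h2 := eq_add_of_sub_eq h
  rw [h2, hv, map_smul, sub_smul]
  simp [neg_smul]
  abel

lemma H_E_pow {t : ℂ} {v : V} (hv : A.H v = t • v) (l : ℕ) :
    A.H ((A.E ^ l) v) = (t + 2*(l:ℂ)) • (A.E ^ l) v := by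
  induction l with
  | zero => simpa using hv
  | succ l ih =>
    have h2 : (A.E ^ (l+1)) v = A.E ((A.E ^ l) v) := by rw [pow_succ', Module.End.mul_apply]
    rw [h2, A.H_E_apply ih]
    push_cast
    ring_nf

lemma H_F_pow {t : ℂ} {v : V} (hv : A.H v = t • v) (l : ℕ) :
    A.H ((A.F ^ l) v) = (t - 2*(l:ℂ)) • (A.F ^ l) v := by
  induction l with
  | zero => simpa using hv
  | succ l ih =>
    have h2 : (A.F ^ (l+1)) v = A.F ((A.F ^ l) v) := by rw [pow_succ', Module.End.mul_apply]
    rw [h2, A.H_F_apply ih]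
    push_cast
    ring_nf

lemma K_apply (hA : IsWeight r A.toOps) {t : ℂ} {v : V} (hv : A.H v = t • v) :
    A.K v = qc r t • v :=
  hA.K_apply t v (Module.End.mem_eigenspace_iff.2 hv)

lemma Kinv_apply (hA : IsWeight r A.toOps) {t : ℂ} {v : V} (hv : A.H v = t • v) :
    A.Kinv v = qc r (-t) • v := by
  have h1 : A.K (A.Kinv v) = qc r t • A.Kinv v := A.K_apply hA (A.H_Kinv_apply hv)
  have h2 : A.K (A.Kinv v) = v := by
    have := LinearMap.congr_fun A.rel_KKinv v
    simpa [Module.End.mul_apply] using this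
  have h3 : qc r (-t) • (qc r t • A.Kinv v) = qc r (-t) • v := by rw [← h1, h2]
  rw [smul_smul, qc_mul, show -t + t = 0 by ring, qc_zero, one_smul] at h3
  exact h3

lemma E_F_apply (hA : IsWeight r A.toOps) {t : ℂ} {v : V} (hv : A.H v = t • v) :
    A.E (A.F v) = A.F (A.E v) + ((qc r t - qc r (-t)) * (qbrk r 1)⁻¹) • v := by
  have h := LinearMap.congr_fun A.rel_EF v
  simp only [LinearMap.sub_apply, Module.End.mul_apply, LinearMap.smul_apply] at h
  have h2 := eq_add_of_sub_eq h
  rw [h2, A.K_apply hA hv, A.Kinv_apply hA hv, ← sub_smul, smul_smul, mul_comm]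
  exact add_comm _ _

lemma E_F_pow (hA : IsWeight r A.toOps) (h1 : qbrk r 1 ≠ 0) :
    ∀ (l : ℕ) {t : ℂ} {w : V}, A.H w = t • w →
      A.E ((A.F ^ (l+1)) w) = (A.F ^ (l+1)) (A.E w)
        + (qbrk r ((l:ℂ)+1) * qbrk r (t - (l:ℂ)) / qbrk r 1 ^ 2) • (A.F ^ l) w := by
  intro l
  induction l with
  | zero =>
    intro t w hw
    have h := A.E_F_apply hA hw
    simp only [pow_one, pow_zero, Module.End.one_apply, Nat.cast_zero, zero_add, sub_zero]
    rw [h]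
    congr 2
    rw [show qc r t - qc r (-t) = qbrk r t from rfl]
    field_simp
  | succ l ih =>
    intro t w hw
    have hFw : A.H (A.F w) = (t - 2) • A.F w := A.H_F_apply hw
    have hp : ∀ (k : ℕ) (x : V), (A.F ^ (k+1)) x = (A.F ^ k) (A.F x) := by
      intro k x; rw [pow_succ, Module.End.mul_apply]
    have h0 : (qc r t - qc r (-t)) * (qbrk r 1)⁻¹ = qbrk r 1 * qbrk r t / qbrk r 1 ^ 2 := by
      rw [show qc r t - qc r (-t) = qbrk r t from rfl]
      field_simp
    have hs : (qc r t - qc r (-t)) * (qbrk r 1)⁻¹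
          + qbrk r ((l:ℂ)+1) * qbrk r (t - 2 - (l:ℂ)) / qbrk r 1 ^ 2
        = qbrk r (((l+1:ℕ):ℂ)+1) * qbrk r (t - ((l+1:ℕ):ℂ)) / qbrk r 1 ^ 2 := by
      push_cast
      rw [h0, ← add_div]
      have hnum : qbrk r 1 * qbrk r t + qbrk r ((l:ℂ)+1) * qbrk r (t - 2 - (l:ℂ))
          = qbrk r ((l:ℂ)+1+1) * qbrk r (t - ((l:ℂ)+1)) := by
        linear_combination (norm := ring_nf) qbrk_id1 r ((l:ℂ)+1) t
      rw [hnum]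
    rw [hp (l+1) w, ih hFw, A.E_F_apply hA hw, map_add, map_smul, ← hp (l+1) (A.E w), ← hp l w,
      add_assoc, ← add_smul, hs]

lemma F_E_pow (hA : IsWeight r A.toOps) (h1 : qbrk r 1 ≠ 0) :
    ∀ (l : ℕ) {t : ℂ} {v : V}, A.H v = t • v →
      A.F ((A.E ^ (l+1)) v) = (A.E ^ (l+1)) (A.F v)
        - (qbrk r ((l:ℂ)+1) * qbrk r (t + (l:ℂ)) / qbrk r 1 ^ 2) • (A.E ^ l) v := by
  intro l
  induction l with
  | zero =>
    intro t v hv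
    have h := A.E_F_apply hA hv
    simp only [pow_one, pow_zero, Module.End.one_apply, Nat.cast_zero, add_zero, zero_add]
    have hc : qbrk r 1 * qbrk r t / qbrk r 1 ^ 2 = (qc r t - qc r (-t)) * (qbrk r 1)⁻¹ := by
      rw [show qc r t - qc r (-t) = qbrk r t from rfl]
      field_simp
    rw [hc, h]
    abel
  | succ l ih =>
    intro t v hv
    have hEv : A.H (A.E v) = (t + 2) • A.E v := A.H_E_apply hv
    have hp : ∀ (k : ℕ) (x : V), (A.E ^ (k+1)) x = (A.E ^ k) (A.E x) := by
      intro k x; rw [pow_succ, Module.End.mul_apply]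
    have hFE : A.F (A.E v) = A.E (A.F v) - ((qc r t - qc r (-t)) * (qbrk r 1)⁻¹) • v := by
      rw [A.E_F_apply hA hv]; abel
    have h0 : (qc r t - qc r (-t)) * (qbrk r 1)⁻¹ = qbrk r 1 * qbrk r t / qbrk r 1 ^ 2 := by
      rw [show qc r t - qc r (-t) = qbrk r t from rfl]
      field_simp
    have hs : (qc r t - qc r (-t)) * (qbrk r 1)⁻¹
          + qbrk r ((l:ℂ)+1) * qbrk r (t + 2 + (l:ℂ)) / qbrk r 1 ^ 2
        = qbrk r (((l+1:ℕ):ℂ)+1) * qbrk r (t + ((l+1:ℕ):ℂ)) / qbrk r 1 ^ 2 := by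
      push_cast
      rw [h0, ← add_div]
      have hnum : qbrk r 1 * qbrk r t + qbrk r ((l:ℂ)+1) * qbrk r (t + 2 + (l:ℂ))
          = qbrk r ((l:ℂ)+1+1) * qbrk r (t + ((l:ℂ)+1)) := by
        linear_combination (norm := ring_nf) qbrk_id3 r ((l:ℂ)+1) t
      rw [hnum]
    rw [hp (l+1) v, ih hEv, hFE, map_sub, map_smul, ← hp (l+1) (A.F v), ← hp l v,
      sub_sub, ← add_smul, hs]

end Rep

lemma ext_weight {X : Type} [AddCommGroup X] [Module ℂ X] {A : Ops V} {B : Ops W}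
    (hA : IsWeight r A) (hB : IsWeight r B) {f g : V ⊗[ℂ] W →ₗ[ℂ] X}
    (h : ∀ (lam mu : ℂ) (v : V) (w : W), A.H v = lam • v → B.H w = mu • w →
      f (v ⊗ₜ[ℂ] w) = g (v ⊗ₜ[ℂ] w)) : f = g := by
  have key : ∀ (lam : ℂ) (v : V), A.H v = lam • v → ∀ w : W, f (v ⊗ₜ[ℂ] w) = g (v ⊗ₜ[ℂ] w) := by
    intro lam v hv w
    have hw : w ∈ (⊤ : Submodule ℂ W) := trivial
    rw [← hB.sup_eigenspaces] at hw
    refine Submodule.iSup_induction _ (motive := fun w => f (v ⊗ₜ[ℂ] w) = g (v ⊗ₜ[ℂ] w)) hw ?_ ?_ ?_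
    · intro mu w hw
      exact h lam mu v w hv (Module.End.mem_eigenspace_iff.1 hw)
    · simp
    · intro x y hx hy
      rw [TensorProduct.tmul_add, map_add, map_add, hx, hy]
  have key2 : ∀ (v : V) (w : W), f (v ⊗ₜ[ℂ] w) = g (v ⊗ₜ[ℂ] w) := by
    intro v w
    have hv : v ∈ (⊤ : Submodule ℂ V) := trivial
    rw [← hA.sup_eigenspaces] at hv
    refine Submodule.iSup_induction _ (motive := fun v => f (v ⊗ₜ[ℂ] w) = g (v ⊗ₜ[ℂ] w)) hv ?_ ?_ ?_
    · intro lam v hv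
      exact key lam v (Module.End.mem_eigenspace_iff.1 hv) w
    · simp
    · intro x y hx hy
      rw [TensorProduct.add_tmul, map_add, map_add, hx, hy]
  exact TensorProduct.ext' key2

lemma braid_apply (A : Rep r V) (B : Rep r W)
    (Q : Module.End ℂ (V ⊗[ℂ] W)) (hQ : IsqHH r A.toOps B.toOps Q)
    {lam mu : ℂ} {v : V} {w : W} (hv : A.H v = lam • v) (hw : B.H w = mu • w) :
    braidMap r A.toOps B.toOps Q (v ⊗ₜ[ℂ] w) =
      ∑ l ∈ Finset.range r, (Cc r l * qc r ((lam + 2*(l:ℂ)) * (mu - 2*(l:ℂ)) / 2)) •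
        ((B.F ^ l) w ⊗ₜ[ℂ] (A.E ^ l) v) := by
  rw [braidMap, LinearMap.comp_apply, LinearMap.comp_apply, braidSum, LinearMap.sum_apply,
    map_sum, map_sum]
  refine Finset.sum_congr rfl fun l hl => ?_
  have hQl := hQ (lam + 2*(l:ℂ)) (mu - 2*(l:ℂ)) ((A.E ^ l) v) ((B.F ^ l) w)
      (Module.End.mem_eigenspace_iff.2 (A.H_E_pow hv l))
      (Module.End.mem_eigenspace_iff.2 (B.H_F_pow hw l))
  simp only [LinearMap.smul_apply, TensorProduct.map_tmul, map_smul, hQl, smul_smul,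
    LinearEquiv.coe_coe, TensorProduct.comm_tmul, Cc]

end Aux

/-- The braiding `c_{V,W}` is `Ū`-linear for all weight modules `V`, `W`. -/
theorem stmt8 (r : ℕ) (hr : 2 ≤ r) (ρV : Rep r V) (ρW : Rep r W)
    (hV : IsWeight r ρV.toOps) (hW : IsWeight r ρW.toOps)
    (Q : Module.End ℂ (V ⊗[ℂ] W)) (hQ : IsqHH r ρV.toOps ρW.toOps Q) :
    IsEquivariant (tensorOps ρV.toOps ρW.toOps) (tensorOps ρW.toOps ρV.toOps)
      (braidMap r ρV.toOps ρW.toOps Q) := by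
  obtain ⟨m, rfl⟩ : ∃ m, r = m + 1 := ⟨r - 1, by omega⟩
  have h1 : qbrk (m+1) 1 ≠ 0 := by
    have := qbrk_ne_zero (m+1) 1 one_pos (by omega)
    simpa using this
  have hEr : ρV.E ^ (m+1) = 0 := ρV.rel_Er
  have hFr : ρW.F ^ (m+1) = 0 := ρW.rel_Fr
  refine ⟨?_, ?_, ?_, ?_, ?_⟩
  · -- K
    suffices h : braidMap (m+1) ρV.toOps ρW.toOps Q ∘ₗ (tensorOps ρV.toOps ρW.toOps).K
        = (tensorOps ρW.toOps ρV.toOps).K ∘ₗ braidMap (m+1) ρV.toOps ρW.toOps Q by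
      intro x
      simpa using LinearMap.congr_fun h x
    apply ext_weight hV hW
    intro lam mu v w hv hw
    simp only [LinearMap.comp_apply]
    rw [show (tensorOps ρV.toOps ρW.toOps).K = TensorProduct.map ρV.K ρW.K from rfl,
      show (tensorOps ρW.toOps ρV.toOps).K = TensorProduct.map ρW.K ρV.K from rfl]
    rw [TensorProduct.map_tmul, ρV.K_apply hV hv, ρW.K_apply hW hw,
      TensorProduct.tmul_smul, ← TensorProduct.smul_tmul', map_smul, map_smul,
      braid_apply ρV ρW Q hQ hv hw, map_sum, Finset.smul_sum, Finset.smul_sum]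
    refine Finset.sum_congr rfl fun l hl => ?_
    rw [map_smul, TensorProduct.map_tmul, ρW.K_apply hW (ρW.H_F_pow hw l),
      ρV.K_apply hV (ρV.H_E_pow hv l), TensorProduct.tmul_smul, ← TensorProduct.smul_tmul']
    simp only [smul_smul]
    congr 1
    simp only [mul_assoc, mul_comm, mul_left_comm, qc_mul]
    ring_nf
  · -- Kinv
    suffices h : braidMap (m+1) ρV.toOps ρW.toOps Q ∘ₗ (tensorOps ρV.toOps ρW.toOps).Kinv
        = (tensorOps ρW.toOps ρV.toOps).Kinv ∘ₗ braidMap (m+1) ρV.toOps ρW.toOps Q by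
      intro x
      simpa using LinearMap.congr_fun h x
    apply ext_weight hV hW
    intro lam mu v w hv hw
    simp only [LinearMap.comp_apply]
    rw [show (tensorOps ρV.toOps ρW.toOps).Kinv = TensorProduct.map ρV.Kinv ρW.Kinv from rfl,
      show (tensorOps ρW.toOps ρV.toOps).Kinv = TensorProduct.map ρW.Kinv ρV.Kinv from rfl]
    rw [TensorProduct.map_tmul, ρV.Kinv_apply hV hv, ρW.Kinv_apply hW hw,
      TensorProduct.tmul_smul, ← TensorProduct.smul_tmul', map_smul, map_smul,
      braid_apply ρV ρW Q hQ hv hw, map_sum, Finset.smul_sum, Finset.smul_sum]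
    refine Finset.sum_congr rfl fun l hl => ?_
    rw [map_smul, TensorProduct.map_tmul, ρW.Kinv_apply hW (ρW.H_F_pow hw l),
      ρV.Kinv_apply hV (ρV.H_E_pow hv l), TensorProduct.tmul_smul, ← TensorProduct.smul_tmul']
    simp only [smul_smul]
    congr 1
    simp only [mul_assoc, mul_comm, mul_left_comm, qc_mul]
    ring_nf
  · -- H
    suffices h : braidMap (m+1) ρV.toOps ρW.toOps Q ∘ₗ (tensorOps ρV.toOps ρW.toOps).H
        = (tensorOps ρW.toOps ρV.toOps).H ∘ₗ braidMap (m+1) ρV.toOps ρW.toOps Q by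
      intro x
      simpa using LinearMap.congr_fun h x
    apply ext_weight hV hW
    intro lam mu v w hv hw
    simp only [LinearMap.comp_apply]
    rw [show (tensorOps ρV.toOps ρW.toOps).H
        = TensorProduct.map ρV.H LinearMap.id + TensorProduct.map LinearMap.id ρW.H from rfl,
      show (tensorOps ρW.toOps ρV.toOps).H
        = TensorProduct.map ρW.H LinearMap.id + TensorProduct.map LinearMap.id ρV.H from rfl]
    rw [LinearMap.add_apply, LinearMap.add_apply, TensorProduct.map_tmul,
      TensorProduct.map_tmul, hv, hw]
    simp only [LinearMap.id_coe, id_eq]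
    rw [TensorProduct.tmul_smul, ← TensorProduct.smul_tmul', map_add, map_smul, map_smul,
      braid_apply ρV ρW Q hQ hv hw, map_sum, map_sum, Finset.smul_sum, Finset.smul_sum,
      ← Finset.sum_add_distrib, ← Finset.sum_add_distrib]
    refine Finset.sum_congr rfl fun l hl => ?_
    rw [map_smul, map_smul, TensorProduct.map_tmul, TensorProduct.map_tmul,
      ρW.H_F_pow hw l, ρV.H_E_pow hv l]
    simp only [LinearMap.id_coe, id_eq]
    rw [TensorProduct.tmul_smul, ← TensorProduct.smul_tmul']
    simp only [smul_smul]
    rw [← add_smul, ← add_smul]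
    congr 1
    ring
  · -- E
    suffices h : braidMap (m+1) ρV.toOps ρW.toOps Q ∘ₗ (tensorOps ρV.toOps ρW.toOps).E
        = (tensorOps ρW.toOps ρV.toOps).E ∘ₗ braidMap (m+1) ρV.toOps ρW.toOps Q by
      intro x
      simpa using LinearMap.congr_fun h x
    apply ext_weight hV hW
    intro lam mu v w hv hw
    have hv' := ρV.H_E_apply hv
    have hw' := ρW.H_E_apply hw
    have hKw : ρW.K w = qc (m+1) mu • w := ρW.K_apply hW hw
    have hKE : ∀ l : ℕ, ρV.K ((ρV.E ^ l) v) = qc (m+1) (lam + 2*(l:ℂ)) • (ρV.E ^ l) v :=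
      fun l => ρV.K_apply hV (ρV.H_E_pow hv l)
    have hpE : ∀ (k : ℕ), ρV.E ((ρV.E ^ k) v) = (ρV.E ^ (k+1)) v := fun k => by
      rw [pow_succ', Module.End.mul_apply]
    have hpE2 : ∀ (k : ℕ), (ρV.E ^ k) (ρV.E v) = (ρV.E ^ (k+1)) v := fun k => by
      rw [pow_succ, Module.End.mul_apply]
    simp only [LinearMap.comp_apply]
    rw [show (tensorOps ρV.toOps ρW.toOps).E
        = TensorProduct.map LinearMap.id ρW.E + TensorProduct.map ρV.E ρW.K from rfl,
      show (tensorOps ρW.toOps ρV.toOps).E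
        = TensorProduct.map LinearMap.id ρV.E + TensorProduct.map ρW.E ρV.K from rfl]
    rw [LinearMap.add_apply, TensorProduct.map_tmul, TensorProduct.map_tmul, hKw]
    simp only [LinearMap.id_coe, id_eq]
    rw [TensorProduct.tmul_smul, map_add, map_smul,
      braid_apply ρV ρW Q hQ hv hw', braid_apply ρV ρW Q hQ hv' hw,
      braid_apply ρV ρW Q hQ hv hw, LinearMap.add_apply, map_sum, map_sum,
      Finset.smul_sum]
    simp only [map_smul, TensorProduct.map_tmul, LinearMap.id_coe, id_eq, hKE, hpE, hpE2,
      TensorProduct.tmul_smul, smul_smul]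
    have hgamma : ∀ l : ℕ, ρW.E ((ρW.F ^ (l+1)) w) = (ρW.F ^ (l+1)) (ρW.E w)
        + (qbrk (m+1) ((l:ℂ)+1) * qbrk (m+1) (mu - (l:ℂ)) / qbrk (m+1) 1 ^ 2) • (ρW.F ^ l) w :=
      fun l => ρW.E_F_pow hW h1 l hw
    have hE0 : (ρV.E ^ (m+1)) v = 0 := by rw [hEr]; rfl
    nth_rewrite 4 [Finset.sum_range_succ' _ m]
    nth_rewrite 1 [Finset.sum_range_succ' _ m]
    rw [Finset.sum_range_succ]
    rw [Finset.sum_range_succ]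
    simp only [hgamma, TensorProduct.add_tmul, ← TensorProduct.smul_tmul', smul_add, smul_smul,
      Finset.sum_add_distrib, hE0, TensorProduct.tmul_zero, smul_zero, add_zero]
    push_cast
    simp only [mul_zero, add_zero, sub_zero, pow_zero, Module.End.one_apply]
    have f1 : Cc (m+1) 0 * qc (m+1) (lam * (mu + 2) / 2)
        = Cc (m+1) 0 * qc (m+1) (lam * mu / 2) * qc (m+1) lam := by
      simp only [mul_assoc, mul_comm, mul_left_comm, qc_mul]; ring_nf
    have f2 : ∀ k : ℕ,
        Cc (m+1) (k+1) * qc (m+1) ((lam + 2 * ((k:ℂ) + 1)) * (mu + 2 - 2 * ((k:ℂ)+1)) / 2)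
        = Cc (m+1) (k+1) * qc (m+1) ((lam + 2 * ((k:ℂ)+1)) * (mu - 2 * ((k:ℂ)+1)) / 2) *
            qc (m+1) (lam + 2 * ((k:ℂ)+1)) := by
      intro k; simp only [mul_assoc, mul_comm, mul_left_comm, qc_mul]; ring_nf
    have f3 : ∀ x ∈ Finset.range m,
        qc (m+1) mu * (Cc (m+1) x * qc (m+1) ((lam + 2 + 2 * (x:ℂ)) * (mu - 2 * (x:ℂ)) / 2))
        = Cc (m+1) x * qc (m+1) ((lam + 2 * (x:ℂ)) * (mu - 2 * (x:ℂ)) / 2)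
          + Cc (m+1) (x+1) * qc (m+1) ((lam + 2 * ((x:ℂ)+1)) * (mu - 2 * ((x:ℂ)+1)) / 2) *
              qc (m+1) (lam + 2 * ((x:ℂ)+1)) *
            (qbrk (m+1) ((x:ℂ)+1) * qbrk (m+1) (mu - (x:ℂ)) / qbrk (m+1) 1 ^ 2) := by
      intro x hx
      have hxm : x < m := Finset.mem_range.1 hx
      have hlx := qbrk_ne_zero (m+1) (x+1) (by omega) (by omega)
      push_cast at hlx
      have hfx := qbrkFact_ne_zero (m+1) x (by omega)
      linear_combination (norm := ring_nf) key_E (m+1) x h1 hlx hfx lam mu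
    have hSB : ∑ x ∈ Finset.range m,
          (qc (m+1) mu * (Cc (m+1) x * qc (m+1) ((lam + 2 + 2 * (x:ℂ)) * (mu - 2 * (x:ℂ)) / 2))) •
            ((ρW.F ^ x) w ⊗ₜ[ℂ] (ρV.E ^ (x + 1)) v)
        = ∑ x ∈ Finset.range m,
          ((Cc (m+1) x * qc (m+1) ((lam + 2 * (x:ℂ)) * (mu - 2 * (x:ℂ)) / 2)) •
            ((ρW.F ^ x) w ⊗ₜ[ℂ] (ρV.E ^ (x + 1)) v)
          + (Cc (m+1) (x+1) * qc (m+1) ((lam + 2 * ((x:ℂ)+1)) * (mu - 2 * ((x:ℂ)+1)) / 2) *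
              qc (m+1) (lam + 2 * ((x:ℂ)+1)) *
            (qbrk (m+1) ((x:ℂ)+1) * qbrk (m+1) (mu - (x:ℂ)) / qbrk (m+1) 1 ^ 2)) •
            ((ρW.F ^ x) w ⊗ₜ[ℂ] (ρV.E ^ (x + 1)) v)) :=
      Finset.sum_congr rfl fun x hx => by rw [f3 x hx, add_smul]
    rw [f1, hSB, Finset.sum_add_distrib]
    simp only [f2]
    abel
  · -- F
    suffices h : braidMap (m+1) ρV.toOps ρW.toOps Q ∘ₗ (tensorOps ρV.toOps ρW.toOps).F
        = (tensorOps ρW.toOps ρV.toOps).F ∘ₗ braidMap (m+1) ρV.toOps ρW.toOps Q by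
      intro x
      simpa using LinearMap.congr_fun h x
    apply ext_weight hV hW
    intro lam mu v w hv hw
    have hv' := ρV.H_F_apply hv
    have hw' := ρW.H_F_apply hw
    have hKv : ρV.Kinv v = qc (m+1) (-lam) • v := ρV.Kinv_apply hV hv
    have hKF : ∀ l : ℕ, ρW.Kinv ((ρW.F ^ l) w) = qc (m+1) (-(mu - 2*(l:ℂ))) • (ρW.F ^ l) w :=
      fun l => ρW.Kinv_apply hW (ρW.H_F_pow hw l)
    have hpF : ∀ (k : ℕ), ρW.F ((ρW.F ^ k) w) = (ρW.F ^ (k+1)) w := fun k => by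
      rw [pow_succ', Module.End.mul_apply]
    have hpF2 : ∀ (k : ℕ), (ρW.F ^ k) (ρW.F w) = (ρW.F ^ (k+1)) w := fun k => by
      rw [pow_succ, Module.End.mul_apply]
    simp only [LinearMap.comp_apply]
    rw [show (tensorOps ρV.toOps ρW.toOps).F
        = TensorProduct.map ρV.F LinearMap.id + TensorProduct.map ρV.Kinv ρW.F from rfl,
      show (tensorOps ρW.toOps ρV.toOps).F
        = TensorProduct.map ρW.F LinearMap.id + TensorProduct.map ρW.Kinv ρV.F from rfl]
    rw [LinearMap.add_apply, TensorProduct.map_tmul, TensorProduct.map_tmul, hKv]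
    simp only [LinearMap.id_coe, id_eq]
    rw [← TensorProduct.smul_tmul', map_add, map_smul,
      braid_apply ρV ρW Q hQ hv' hw, braid_apply ρV ρW Q hQ hv hw',
      braid_apply ρV ρW Q hQ hv hw, LinearMap.add_apply, map_sum, map_sum,
      Finset.smul_sum]
    simp only [map_smul, TensorProduct.map_tmul, LinearMap.id_coe, id_eq, hKF, hpF, hpF2,
      ← TensorProduct.smul_tmul', smul_smul]
    have hdelta : ∀ l : ℕ, ρV.F ((ρV.E ^ (l+1)) v) = (ρV.E ^ (l+1)) (ρV.F v)
        - (qbrk (m+1) ((l:ℂ)+1) * qbrk (m+1) (lam + (l:ℂ)) / qbrk (m+1) 1 ^ 2) • (ρV.E ^ l) v :=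
      fun l => ρV.F_E_pow hV h1 l hv
    have hF0 : (ρW.F ^ (m+1)) w = 0 := by rw [hFr]; rfl
    nth_rewrite 4 [Finset.sum_range_succ' _ m]
    nth_rewrite 1 [Finset.sum_range_succ' _ m]
    rw [Finset.sum_range_succ]
    rw [Finset.sum_range_succ]
    simp only [hdelta, TensorProduct.tmul_sub, TensorProduct.tmul_smul, smul_sub, smul_smul,
      Finset.sum_sub_distrib, hF0, TensorProduct.zero_tmul, smul_zero, add_zero]
    push_cast
    simp only [mul_zero, add_zero, sub_zero, pow_zero, Module.End.one_apply]
    have g1 : Cc (m+1) 0 * qc (m+1) ((lam - 2) * mu / 2)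
        = Cc (m+1) 0 * qc (m+1) (lam * mu / 2) * qc (m+1) (-mu) := by
      simp only [mul_assoc, mul_comm, mul_left_comm, qc_mul]; ring_nf
    have g2 : ∀ k : ℕ,
        Cc (m+1) (k+1) * qc (m+1) ((lam - 2 + 2 * ((k:ℂ) + 1)) * (mu - 2 * ((k:ℂ)+1)) / 2)
        = Cc (m+1) (k+1) * qc (m+1) ((lam + 2 * ((k:ℂ)+1)) * (mu - 2 * ((k:ℂ)+1)) / 2) *
            qc (m+1) (-(mu - 2 * ((k:ℂ)+1))) := by
      intro k; simp only [mul_assoc, mul_comm, mul_left_comm, qc_mul]; ring_nf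
    have g3 : ∀ x ∈ Finset.range m,
        qc (m+1) (-lam) * (Cc (m+1) x * qc (m+1) ((lam + 2 * (x:ℂ)) * (mu - 2 - 2 * (x:ℂ)) / 2))
        = Cc (m+1) x * qc (m+1) ((lam + 2 * (x:ℂ)) * (mu - 2 * (x:ℂ)) / 2)
          - Cc (m+1) (x+1) * qc (m+1) ((lam + 2 * ((x:ℂ)+1)) * (mu - 2 * ((x:ℂ)+1)) / 2) *
              qc (m+1) (-(mu - 2 * ((x:ℂ)+1))) *
            (qbrk (m+1) ((x:ℂ)+1) * qbrk (m+1) (lam + (x:ℂ)) / qbrk (m+1) 1 ^ 2) := by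
      intro x hx
      have hxm : x < m := Finset.mem_range.1 hx
      have hlx := qbrk_ne_zero (m+1) (x+1) (by omega) (by omega)
      push_cast at hlx
      have hfx := qbrkFact_ne_zero (m+1) x (by omega)
      linear_combination (norm := ring_nf) key_F (m+1) x h1 hlx hfx lam mu
    have hSB : ∑ x ∈ Finset.range m,
          (qc (m+1) (-lam) * (Cc (m+1) x * qc (m+1) ((lam + 2 * (x:ℂ)) * (mu - 2 - 2 * (x:ℂ)) / 2))) •
            ((ρW.F ^ (x+1)) w ⊗ₜ[ℂ] (ρV.E ^ x) v)
        = ∑ x ∈ Finset.range m,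
          ((Cc (m+1) x * qc (m+1) ((lam + 2 * (x:ℂ)) * (mu - 2 * (x:ℂ)) / 2)) •
            ((ρW.F ^ (x+1)) w ⊗ₜ[ℂ] (ρV.E ^ x) v)
          - (Cc (m+1) (x+1) * qc (m+1) ((lam + 2 * ((x:ℂ)+1)) * (mu - 2 * ((x:ℂ)+1)) / 2) *
              qc (m+1) (-(mu - 2 * ((x:ℂ)+1))) *
            (qbrk (m+1) ((x:ℂ)+1) * qbrk (m+1) (lam + (x:ℂ)) / qbrk (m+1) 1 ^ 2)) •
            ((ρW.F ^ (x+1)) w ⊗ₜ[ℂ] (ρV.E ^ x) v)) :=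
      Finset.sum_congr rfl fun x hx => by rw [g3 x hx, sub_smul]
    rw [g1, hSB, Finset.sum_sub_distrib]
    simp only [g2]
    abel

end Unrolled
end
end
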